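/- If kΩ₀² + ε² > 0 (so ΔE = √(kΩ₀²+ε²) > 0 is real) and (k+1)Ω₀/2 + iε ≠ 0, then the eigenstate ψ± of H_rot is also an eigenstate of the antilinear PT operator PT(v) = σₓ · conj(v), with eigenvalue (±ΔE + i(k−1)Ω₀/2)/((k+1)Ω₀/2 + iε). -/
import Mathlib


open Matrix

private lemma div_mul_aux {a x b d : ℂ} (hd : d ≠ 0) (h : a * d = x * b) :
    a = x / d * b := by
  rw [div_mul_eq_mul_div, eq_div_iff hd, h]

theorem lzsm_rot_pt_eigenstates (ε Ω₀ k : ℝ) (h : k * Ω₀^2 + ε^2 > 0)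
    (hne : ((k+1)/2*Ω₀ : ℂ) + Complex.I*ε ≠ 0)
    (ΔE : ℝ) (hΔ : ΔE = Real.sqrt (k * Ω₀^2 + ε^2))
    (ψp ψm : Fin 2 → ℂ)
    (hp : ψp = ![(ΔE : ℂ) - Complex.I*(k-1)/2*Ω₀, (k+1)/2*Ω₀ + Complex.I*ε])
    (hm : ψm = ![(-ΔE : ℂ) - Complex.I*(k-1)/2*Ω₀, (k+1)/2*Ω₀ + Complex.I*ε]) :
    ![(starRingEnd ℂ) (ψp 1), (starRingEnd ℂ) (ψp 0)]
      = (((ΔE : ℂ) + Complex.I*(k-1)/2*Ω₀)/((k+1)/2*Ω₀ + Complex.I*ε)) • ψp ∧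
    ![(starRingEnd ℂ) (ψm 1), (starRingEnd ℂ) (ψm 0)]
      = (((-ΔE : ℂ) + Complex.I*(k-1)/2*Ω₀)/((k+1)/2*Ω₀ + Complex.I*ε)) • ψm := by
  have hr : ΔE ^ 2 = k * Ω₀ ^ 2 + ε ^ 2 := by rw [hΔ, Real.sq_sqrt h.le]
  have hΔ2 : (ΔE : ℂ)^2 = (k : ℂ) * Ω₀^2 + ε^2 := by exact_mod_cast congrArg Complex.ofReal hr
  have hne' : ((k:ℂ)+1) * Ω₀ / 2 + Complex.I*ε ≠ 0 := by
    rw [show ((k:ℂ)+1) * Ω₀ / 2 + Complex.I*ε = (k+1)/2*Ω₀ + Complex.I*ε by ring]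
    exact hne
  subst hp hm
  constructor <;>
  · funext i
    fin_cases i <;>
    · simp only [Fin.mk_zero, Fin.mk_one, Fin.isValue, Matrix.cons_val_zero,
        Matrix.cons_val_one, Matrix.head_cons, Pi.smul_apply, smul_eq_mul,
        map_add, map_sub, _root_.map_mul, map_div₀, map_neg,
        Complex.conj_I, Complex.conj_ofReal, _root_.map_one, map_ofNat]
      refine div_mul_aux (by first | exact hne | exact hne') ?_
      first
      | linear_combination hΔ2
      | linear_combination -hΔ2
      | linear_combination -hΔ2 - ((ε:ℂ)^2 + k*Ω₀^2/2 - k^2*Ω₀^2/4 - Ω₀^2/4) * Complex.I_sq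
      | linear_combination hΔ2 + ((ε:ℂ)^2 + k*Ω₀^2/2 - k^2*Ω₀^2/4 - Ω₀^2/4) * Complex.I_sq
      | ring
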